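/- Let p be a prime number, m a natural number, and A a commutative ring in which p^m · A = 0. Let I be an ideal of A equipped with a divided power structure. Then for every x ∈ A and every a ∈ I one has (x + a)^(p^m) = x^(p^m). -/

import Mathlib

lemma self_dvd_descFactorial (n k : ℕ) (hk : 1 ≤ k) (hkn : k ≤ n) :
    n ∣ n.descFactorial k := by
  induction k with
  | zero => omega
  | succ k ih =>
    rcases Nat.eq_zero_or_pos k with rfl | hk0
    · simpa using dvd_refl n
    · rw [Nat.descFactorial_succ]
      exact Dvd.dvd.mul_left (ih hk0 (by omega)) _

/-- Let `p` be a prime, `m : ℕ`, and `A` a commutative ring with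
`p ^ m • A = 0` (i.e. `(p : A) ^ m = 0`).  Let `I` be an ideal of `A` equipped with a
divided power structure.  Then for every `x ∈ A` and `a ∈ I` one has
`(x + a) ^ (p ^ m) = x ^ (p ^ m)`. -/
theorem statement0 (p : ℕ) (hp : p.Prime) (m : ℕ) (A : Type*) [CommRing A]
    (hpm : (p : A) ^ m = 0) (I : Ideal A) (hI : DividedPowers I)
    (x a : A) (ha : a ∈ I) :
    (x + a) ^ (p ^ m) = x ^ (p ^ m) := by
  set N := p ^ m with hN
  have hNA : (N : A) = 0 := by rw [hN]; push_cast; exact hpm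
  rw [add_pow]
  rw [Finset.sum_eq_single N]
  · simp
  · intro k hk hkN
    have hklt : k < N := lt_of_le_of_ne (Nat.lt_succ_iff.mp (Finset.mem_range.mp hk)) hkN
    have h1 : a ^ (N - k) = (N - k).factorial * hI.dpow (N - k) a :=
      (hI.factorial_mul_dpow_eq_pow ha).symm
    have hdvd : N ∣ (N - k).factorial * N.choose k := by
      rw [← Nat.choose_symm hklt.le, ← Nat.descFactorial_eq_factorial_mul_choose]
      exact self_dvd_descFactorial N (N - k) (by omega) (by omega)
    obtain ⟨c, hc⟩ := hdvd
    calc x ^ k * a ^ (N - k) * (N.choose k : A)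
        = x ^ k * hI.dpow (N - k) a * (((N - k).factorial * N.choose k : ℕ) : A) := by
          push_cast; rw [h1]; ring
      _ = 0 := by rw [hc]; push_cast [hNA]; ring
  · intro h
    simp at h
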